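/- For every α > 1 and every n ≥ 3 there exists a weighted complete graph G on n vertices such that the characteristic vectors of the α-near-mincuts of G span ℝ^{C(n,2)}, i.e., cdim_α(G) = C(n,2). Concretely, take cycle edges of weight 1 and all other pairs of weight ε = 2(α−1)/C(n,2). -/
import Mathlib


open Finset

/-- Two finite sets overlap if their intersection and both differences are nonempty. -/
def overlap {V : Type*} [DecidableEq V] (X Y : Finset V) : Prop :=
  (X ∩ Y).Nonempty ∧ (X \ Y).Nonempty ∧ (Y \ X).Nonempty

/-- Two shores cross if all four corner sets are nonempty. -/
def crossing {V : Type*} [DecidableEq V] [Fintype V] (X Y : Finset V) : Prop :=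
  (X ∩ Y).Nonempty ∧ (X \ Y).Nonempty ∧ (Y \ X).Nonempty ∧ (Xᶜ ∩ Yᶜ).Nonempty

/-- X is the shore of a cut: nonempty and proper. -/
def isCutShore {V : Type*} [Fintype V] (X : Finset V) : Prop :=
  X.Nonempty ∧ X ≠ Finset.univ

/-- The weight of the cut Δ(X) in the weighted graph with (symmetric) weights w. -/
noncomputable def cutWeight {V : Type*} [DecidableEq V] [Fintype V]
    (w : V → V → ℝ) (X : Finset V) : ℝ :=
  (1/2) * ∑ p : V × V,
    if (p.1 ∈ X ∧ p.2 ∉ X) ∨ (p.2 ∈ X ∧ p.1 ∉ X) then w p.1 p.2 else 0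

/-- Δ(X) is a minimum cut. -/
def isMinCut {V : Type*} [DecidableEq V] [Fintype V] (w : V → V → ℝ) (X : Finset V) : Prop :=
  isCutShore X ∧ ∀ Y : Finset V, isCutShore Y → cutWeight w X ≤ cutWeight w Y

/-- The characteristic vector of the cut Δ(X) among the edges (pairs of positive weight). -/
noncomputable def cutVec {V : Type*} [DecidableEq V] [Fintype V]
    (w : V → V → ℝ) (X : Finset V) : V × V → ℝ :=
  fun p => if (((p.1 ∈ X ∧ p.2 ∉ X) ∨ (p.2 ∈ X ∧ p.1 ∉ X)) ∧ 0 < w p.1 p.2) then 1 else 0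

namespace Stmt17Aux


variable {n : ℕ} [NeZero n]

noncomputable def ind (X : Finset (ZMod n)) (u : ZMod n) : ℝ := if u ∈ X then 1 else 0

def E (s : Finset (ZMod n)) : ZMod n × ZMod n → ℝ :=
  fun p => if p.1 ∈ s ∧ p.2 ∈ s ∧ p.1 ≠ p.2 then 1 else 0

def arc (c : ZMod n) (m : ℕ) : Finset (ZMod n) :=
  (Finset.range m).image (fun t : ℕ => c + (t : ZMod n))

lemma mem_arc {c x : ZMod n} {m : ℕ} : x ∈ arc c m ↔ ∃ t, t < m ∧ x = c + (t : ZMod n) := by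
  simp only [arc, Finset.mem_image, Finset.mem_range]
  constructor
  · rintro ⟨t, ht, rfl⟩; exact ⟨t, ht, rfl⟩
  · rintro ⟨t, ht, rfl⟩; exact ⟨t, ht, rfl⟩

lemma cast_inj_of_lt {a b : ℕ} (ha : a < n) (hb : b < n) (h : (a : ZMod n) = b) : a = b := by
  have := congrArg ZMod.val h
  rwa [ZMod.val_cast_of_lt ha, ZMod.val_cast_of_lt hb] at this

lemma arc_succ (c : ZMod n) (m : ℕ) : arc c (m + 1) = insert c (arc (c + 1) m) := by
  ext x
  simp only [mem_arc, Finset.mem_insert]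
  constructor
  · rintro ⟨t, ht, rfl⟩
    rcases Nat.eq_zero_or_pos t with h | h
    · subst h; left; simp
    · right
      refine ⟨t - 1, by omega, ?_⟩
      have : ((t - 1 : ℕ) : ZMod n) + 1 = (t : ZMod n) := by
        have : ((t - 1 : ℕ) + 1 : ℕ) = t := by omega
        calc ((t - 1 : ℕ) : ZMod n) + 1 = (((t - 1 : ℕ) + 1 : ℕ) : ZMod n) := by push_cast; ring
        _ = (t : ZMod n) := by rw [this]
      rw [← this]; ring
  · rintro (rfl | ⟨t, ht, rfl⟩)
    · exact ⟨0, by omega, by simp⟩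
    · exact ⟨t + 1, by omega, by push_cast; ring⟩

lemma arc_snoc (c : ZMod n) (m : ℕ) : arc c (m + 1) = insert (c + (m : ZMod n)) (arc c m) := by
  ext x
  simp only [mem_arc, Finset.mem_insert]
  constructor
  · rintro ⟨t, ht, rfl⟩
    rcases Nat.lt_or_ge t m with h | h
    · exact Or.inr ⟨t, h, rfl⟩
    · have : t = m := by omega
      subst this; exact Or.inl rfl
  · rintro (rfl | ⟨t, ht, rfl⟩)
    · exact ⟨m, by omega, rfl⟩
    · exact ⟨t, by omega, rfl⟩

lemma card_arc {c : ZMod n} {m : ℕ} (hm : m ≤ n) : (arc c m).card = m := by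
  rw [arc, Finset.card_image_of_injOn, Finset.card_range]
  intro a ha b hb hab
  simp only [Finset.coe_range, Set.mem_Iio] at ha hb
  have : (a : ZMod n) = b := by
    have := hab
    simpa using congrArg (fun z => z - c) (by simpa [add_comm] using hab)
  exact cast_inj_of_lt (lt_of_lt_of_le ha hm) (lt_of_lt_of_le hb hm) this

lemma arc_nonempty {c : ZMod n} {m : ℕ} (hm : 1 ≤ m) : (arc c m).Nonempty :=
  ⟨c, mem_arc.mpr ⟨0, by omega, by simp⟩⟩

lemma arc_ne_univ {c : ZMod n} {m : ℕ} (hm : m < n) : arc c m ≠ Finset.univ := by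
  intro h
  have h1 : (arc c m).card = m := card_arc (le_of_lt hm)
  have h2 : (Finset.univ : Finset (ZMod n)).card = n := by
    rw [Finset.card_univ, ZMod.card]
  rw [h, h2] at h1; omega

lemma arc_zero (c : ZMod n) : arc c 0 = ∅ := by simp [arc]

lemma arc_univ (c : ZMod n) : arc c n = Finset.univ := by
  apply Finset.eq_univ_of_card
  rw [card_arc le_rfl]
  exact (ZMod.card n).symm

lemma notMem_arc_self {a : ZMod n} {m : ℕ} (hm : m < n) : a ∉ arc (a + 1) m := by
  rw [mem_arc]
  rintro ⟨t, ht, h⟩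
  have : ((t + 1 : ℕ) : ZMod n) = 0 := by
    push_cast
    have := congrArg (fun z => z - a) h
    simp at this
    linear_combination -this
  rw [ZMod.natCast_eq_zero_iff] at this
  have := Nat.le_of_dvd (by omega) this
  omega

lemma notMem_arc_end {a : ZMod n} {k : ℕ} (hk : k < n) :
    a + (k : ZMod n) ∉ arc (a + 1) (k - 1) := by
  rw [mem_arc]
  rintro ⟨t, ht, h⟩
  have h2 : (k : ZMod n) = ((t + 1 : ℕ) : ZMod n) := by
    push_cast
    have := congrArg (fun z => z - a) h
    simp at this
    linear_combination this
  have := cast_inj_of_lt hk (by omega) h2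
  omega



-- boundary lemmas
lemma boundary_out {c i : ZMod n} {m : ℕ} (hi : i ∈ arc c m) (hi1 : i + 1 ∉ arc c m) :
    i = c + ((m - 1 : ℕ) : ZMod n) := by
  obtain ⟨t, ht, rfl⟩ := mem_arc.mp hi
  by_cases h : t + 1 < m
  · exact absurd (mem_arc.mpr ⟨t + 1, h, by push_cast; ring⟩) hi1
  · have : t = m - 1 := by omega
    rw [this]

lemma boundary_in {c i : ZMod n} {m : ℕ} (hi : i ∉ arc c m) (hi1 : i + 1 ∈ arc c m) :
    i + 1 = c := by
  obtain ⟨t, ht, h⟩ := mem_arc.mp hi1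
  rcases Nat.eq_zero_or_pos t with h0 | h0
  · rw [h0] at h; simpa using h
  · exfalso
    apply hi
    apply mem_arc.mpr ⟨t - 1, by omega, ?_⟩
    have hc : ((t - 1 : ℕ) : ZMod n) + 1 = (t : ZMod n) := by
      have h2 : ((t - 1 : ℕ) + 1 : ℕ) = t := by omega
      calc ((t - 1 : ℕ) : ZMod n) + 1 = (((t - 1 : ℕ) + 1 : ℕ) : ZMod n) := by push_cast; ring
      _ = (t : ZMod n) := by rw [h2]
    linear_combination h - hc

-- indicator lemmas
lemma ind_insert {a : ZMod n} {G : Finset (ZMod n)} (ha : a ∉ G) (u : ZMod n) :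
    ind (insert a G) u = ind ({a} : Finset (ZMod n)) u + ind G u := by
  by_cases h1 : u = a
  · subst h1; simp [ind, ha]
  · by_cases h2 : u ∈ G <;> simp [ind, h1, h2]

lemma E_pair {a b : ZMod n} (hab : a ≠ b) (u v : ZMod n) :
    E ({a, b} : Finset (ZMod n)) (u, v) =
      ind ({a} : Finset (ZMod n)) u * ind ({b} : Finset (ZMod n)) v +
      ind ({b} : Finset (ZMod n)) u * ind ({a} : Finset (ZMod n)) v := by
  simp only [E, ind, Finset.mem_insert, Finset.mem_singleton]
  by_cases h1 : u = a <;> by_cases h2 : u = b <;> by_cases h3 : v = a <;> by_cases h4 : v = b <;>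
    simp_all <;> tauto

-- cutVec formula
lemma cutVec_eq (w : ZMod n → ZMod n → ℝ) (hw : ∀ u v, 0 < w u v) (X : Finset (ZMod n))
    (u v : ZMod n) :
    cutVec w X (u, v) = ind X u + ind X v - 2 * ind X u * ind X v := by
  by_cases h1 : u ∈ X <;> by_cases h2 : v ∈ X <;>
    simp [cutVec, ind, h1, h2, hw u v] <;> ring

lemma cutVec_empty (w : ZMod n → ZMod n → ℝ) : cutVec w (∅ : Finset (ZMod n)) = 0 := by
  funext p; simp [cutVec]

lemma cutVec_univ (w : ZMod n → ZMod n → ℝ) : cutVec w (Finset.univ : Finset (ZMod n)) = 0 := by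
  funext p; simp [cutVec]

-- key algebraic identity
lemma key_identity (w : ZMod n → ZMod n → ℝ) (hw : ∀ u v, 0 < w u v) {a b : ZMod n}
    (hab : a ≠ b) {G : Finset (ZMod n)} (ha : a ∉ G) (hb : b ∉ G) :
    E ({a, b} : Finset (ZMod n)) = (1 / 2 : ℝ) •
      (cutVec w (insert a G) + cutVec w (insert b G)
        - cutVec w G - cutVec w (insert a (insert b G))) := by
  funext p
  obtain ⟨u, v⟩ := p
  have haG : a ∉ insert b G := by simp [hab, ha]
  simp only [Pi.smul_apply, Pi.add_apply, Pi.sub_apply, smul_eq_mul]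
  rw [cutVec_eq w hw, cutVec_eq w hw, cutVec_eq w hw, cutVec_eq w hw, E_pair hab,
    ind_insert ha, ind_insert ha, ind_insert hb, ind_insert hb,
    ind_insert haG, ind_insert haG, ind_insert hb, ind_insert hb]
  ring

-- decomposition of a cut vector in terms of E's
lemma cutVec_decomp (w : ZMod n → ZMod n → ℝ) (hw : ∀ u v, 0 < w u v) (X : Finset (ZMod n)) :
    cutVec w X = ∑ s : {s : Finset (ZMod n) // s.card = 2},
      (if (s.1 ∩ X).Nonempty ∧ (s.1 \ X).Nonempty then (1 : ℝ) else 0) • E s.1 := by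
  funext p
  obtain ⟨u, v⟩ := p
  rw [Finset.sum_apply]
  simp only [Pi.smul_apply, smul_eq_mul]
  by_cases huv : u = v
  · subst huv
    have : ∀ s : {s : Finset (ZMod n) // s.card = 2},
        (if (s.1 ∩ X).Nonempty ∧ (s.1 \ X).Nonempty then (1 : ℝ) else 0) * E s.1 (u, u) = 0 := by
      intro s; simp [E]
    rw [Finset.sum_congr rfl (fun s _ => this s), Finset.sum_const_zero]
    simp [cutVec]
  · have hcard : ({u, v} : Finset (ZMod n)).card = 2 := Finset.card_pair huv
    rw [Finset.sum_eq_single (⟨{u, v}, hcard⟩ : {s : Finset (ZMod n) // s.card = 2})]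
    · have hE : E ({u, v} : Finset (ZMod n)) (u, v) = 1 := by
        simp [E, huv]
      simp only [hE, smul_eq_mul, mul_one]
      have hint : (({u, v} : Finset (ZMod n)) ∩ X).Nonempty ↔ (u ∈ X ∨ v ∈ X) := by
        constructor
        · rintro ⟨x, hx⟩
          simp only [Finset.mem_inter, Finset.mem_insert, Finset.mem_singleton] at hx
          rcases hx.1 with rfl | rfl
          · exact Or.inl hx.2
          · exact Or.inr hx.2
        · rintro (h | h)
          · exact ⟨u, by simp [h]⟩
          · exact ⟨v, by simp [h]⟩
      have hsd : (({u, v} : Finset (ZMod n)) \ X).Nonempty ↔ (u ∉ X ∨ v ∉ X) := by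
        constructor
        · rintro ⟨x, hx⟩
          simp only [Finset.mem_sdiff, Finset.mem_insert, Finset.mem_singleton] at hx
          rcases hx.1 with rfl | rfl
          · exact Or.inl hx.2
          · exact Or.inr hx.2
        · rintro (h | h)
          · exact ⟨u, by simp [h]⟩
          · exact ⟨v, by simp [h]⟩
      by_cases h1 : u ∈ X <;> by_cases h2 : v ∈ X <;>
        simp [cutVec, h1, h2, hw u v, hint, hsd, hE]
    · rintro ⟨s, hs⟩ - hne
      by_cases hE : E s (u, v) = 0
      · simp [hE]
      · exfalso
        apply hne
        have : u ∈ s ∧ v ∈ s ∧ u ≠ v := by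
          by_contra hc
          exact hE (by simp [E, hc])
        have hsub : ({u, v} : Finset (ZMod n)) ⊆ s := by
          intro x hx
          simp only [Finset.mem_insert, Finset.mem_singleton] at hx
          rcases hx with rfl | rfl
          · exact this.1
          · exact this.2.1
        have : ({u, v} : Finset (ZMod n)) = s :=
          Finset.eq_of_subset_of_card_le hsub (by rw [hs, hcard])
        exact Subtype.ext this.symm
    · intro h
      exact absurd (Finset.mem_univ _) h

-- linear independence of the E's
lemma linind : LinearIndependent ℝ (fun s : {s : Finset (ZMod n) // s.card = 2} => E s.1) := by
  rw [Fintype.linearIndependent_iff]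
  intro g hg s
  obtain ⟨a, b, hab, hs⟩ := Finset.card_eq_two.mp s.2
  have := congrFun hg (a, b)
  rw [Finset.sum_apply] at this
  simp only [Pi.zero_apply] at this
  rw [Finset.sum_eq_single s] at this
  · have hE : E s.1 (a, b) = 1 := by
      simp [E, hs, hab]
    simpa [hE] using this
  · rintro ⟨t, ht⟩ - hne
    by_cases hE : E t (a, b) = 0
    · simp [hE]
    · exfalso
      apply hne
      have hmem : a ∈ t ∧ b ∈ t ∧ a ≠ b := by
        by_contra hc
        exact hE (by simp [E, hc])
      have hsub : ({a, b} : Finset (ZMod n)) ⊆ t := by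
        intro x hx
        simp only [Finset.mem_insert, Finset.mem_singleton] at hx
        rcases hx with rfl | rfl
        · exact hmem.1
        · exact hmem.2.1
      have : ({a, b} : Finset (ZMod n)) = t :=
        Finset.eq_of_subset_of_card_le hsub (by rw [ht, Finset.card_pair hab])
      exact Subtype.ext (by rw [hs]; exact this.symm)
  · intro h
    exact absurd (Finset.mem_univ _) h

-- cardinality of the index type
lemma card_pairs : Fintype.card {s : Finset (ZMod n) // s.card = 2} = n.choose 2 := by
  rw [Fintype.card_subtype]
  have : Finset.univ.filter (fun s : Finset (ZMod n) => s.card = 2)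
      = Finset.powersetCard 2 (Finset.univ : Finset (ZMod n)) := by
    rw [Finset.powersetCard_eq_filter, Finset.powerset_univ]
  rw [this, Finset.card_powersetCard, Finset.card_univ, ZMod.card]

lemma natCast_ne_zero' {k : ℕ} (h1 : 0 < k) (h2 : k < n) : (k : ZMod n) ≠ 0 := by
  intro hd
  rw [ZMod.natCast_eq_zero_iff] at hd
  have := Nat.le_of_dvd h1 hd
  omega

lemma one_ne_zero'' (hn : 3 ≤ n) : (1 : ZMod n) ≠ 0 := by
  have := natCast_ne_zero' (n := n) (k := 1) (by omega) (by omega)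
  simpa using this

lemma two_ne_zero'' (hn : 3 ≤ n) : (2 : ZMod n) ≠ 0 := by
  have := natCast_ne_zero' (n := n) (k := 2) (by omega) (by omega)
  simpa using this

lemma exists_up {X : Finset (ZMod n)} (hne : X.Nonempty) (hnu : X ≠ Finset.univ) :
    ∃ i, i ∈ X ∧ i + 1 ∉ X := by
  by_contra h
  push_neg at h
  obtain ⟨v, hv⟩ := hne
  have hall : ∀ t : ℕ, v + (t : ZMod n) ∈ X := by
    intro t
    induction t with
    | zero => simpa using hv
    | succ t ih =>
      have := h _ ih
      have he : v + ((t + 1 : ℕ) : ZMod n) = v + (t : ZMod n) + 1 := by push_cast; ring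
      rwa [he]
  apply hnu
  apply Finset.eq_univ_iff_forall.mpr
  intro x
  have := hall (x - v).val
  rwa [ZMod.natCast_zmod_val, show v + (x - v) = x from by ring] at this

lemma exists_down {X : Finset (ZMod n)} (hne : X.Nonempty) (hnu : X ≠ Finset.univ) :
    ∃ i, i ∉ X ∧ i + 1 ∈ X := by
  by_contra h
  push_neg at h
  have hu : ∃ u, u ∉ X := by
    by_contra h'
    push_neg at h'
    exact hnu (Finset.eq_univ_iff_forall.mpr h')
  obtain ⟨u, hu⟩ := hu
  have hall : ∀ t : ℕ, u + (t : ZMod n) ∉ X := by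
    intro t
    induction t with
    | zero => simpa using hu
    | succ t ih =>
      have := h _ ih
      have he : u + ((t + 1 : ℕ) : ZMod n) = u + (t : ZMod n) + 1 := by push_cast; ring
      rwa [he]
  obtain ⟨v, hv⟩ := hne
  apply hall (v - u).val
  rwa [ZMod.natCast_zmod_val, show u + (v - u) = v from by ring]

lemma two_le_cutWeight (hn : 3 ≤ n) (w : ZMod n → ZMod n → ℝ) (hpos : ∀ u v, 0 ≤ w u v)
    (hcyc : ∀ i : ZMod n, w i (i + 1) = 1) (hcyc' : ∀ i : ZMod n, w (i + 1) i = 1)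
    {X : Finset (ZMod n)} (hX : isCutShore X) : 2 ≤ cutWeight w X := by
  obtain ⟨i, hi, hi1⟩ := exists_up hX.1 hX.2
  obtain ⟨j, hj, hj1⟩ := exists_down hX.1 hX.2
  have h1 : (1 : ZMod n) ≠ 0 := one_ne_zero'' hn
  have h2 : (2 : ZMod n) ≠ 0 := two_ne_zero'' hn
  have hij : i ≠ j := fun h => hj (h ▸ hi)
  have hii1 : i ≠ i + 1 := fun h => h1 (by linear_combination -h)
  have hjj1 : j ≠ j + 1 := fun h => h1 (by linear_combination -h)
  have hcross : ¬(i = j + 1 ∧ j = i + 1) := by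
    rintro ⟨p, q⟩
    rw [q] at p
    exact h2 (by linear_combination -p)
  classical
  set f : ZMod n × ZMod n → ℝ := fun p =>
    if (p.1 ∈ X ∧ p.2 ∉ X) ∨ (p.2 ∈ X ∧ p.1 ∉ X) then w p.1 p.2 else 0 with hf
  have hfnn : ∀ p, 0 ≤ f p := by
    intro p
    rw [hf]
    dsimp only
    split
    · exact hpos _ _
    · exact le_refl 0
  have d1 : ((i, i+1) : ZMod n × ZMod n) ∉ ({(i+1, i), (j, j+1), (j+1, j)} : Finset _) := by
    simp only [Finset.mem_insert, Finset.mem_singleton, Prod.mk.injEq, not_or]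
    exact ⟨fun h => hii1 h.1, fun h => hij h.1, fun h => hcross ⟨h.1, h.2.symm⟩⟩
  have d2 : ((i+1, i) : ZMod n × ZMod n) ∉ ({(j, j+1), (j+1, j)} : Finset _) := by
    simp only [Finset.mem_insert, Finset.mem_singleton, Prod.mk.injEq, not_or]
    exact ⟨fun h => hcross ⟨h.2, h.1.symm⟩, fun h => hij (by linear_combination h.1)⟩
  have d3 : ((j, j+1) : ZMod n × ZMod n) ∉ ({(j+1, j)} : Finset _) := by
    simp only [Finset.mem_singleton, Prod.mk.injEq, not_and]
    exact fun h => absurd h (fun h' => hjj1 h')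
  have v1 : f (i, i+1) = 1 := by
    rw [hf]; dsimp only; rw [if_pos (Or.inl ⟨hi, hi1⟩)]; exact hcyc i
  have v2 : f (i+1, i) = 1 := by
    rw [hf]; dsimp only; rw [if_pos (Or.inr ⟨hi, hi1⟩)]; exact hcyc' i
  have v3 : f (j, j+1) = 1 := by
    rw [hf]; dsimp only; rw [if_pos (Or.inr ⟨hj1, hj⟩)]; exact hcyc j
  have v4 : f (j+1, j) = 1 := by
    rw [hf]; dsimp only; rw [if_pos (Or.inl ⟨hj1, hj⟩)]; exact hcyc' j
  have hsum : ∑ p ∈ ({(i, i+1), (i+1, i), (j, j+1), (j+1, j)} : Finset (ZMod n × ZMod n)), f p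
      = 4 := by
    rw [Finset.sum_insert d1, Finset.sum_insert d2, Finset.sum_insert d3,
      Finset.sum_singleton, v1, v2, v3, v4]
    norm_num
  have hle : ∑ p ∈ ({(i, i+1), (i+1, i), (j, j+1), (j+1, j)} : Finset (ZMod n × ZMod n)), f p
      ≤ ∑ p : ZMod n × ZMod n, f p :=
    Finset.sum_le_sum_of_subset_of_nonneg (Finset.subset_univ _) (fun p _ _ => hfnn p)
  have : cutWeight w X = 1/2 * ∑ p : ZMod n × ZMod n, f p := rfl
  rw [this]
  rw [hsum] at hle
  linarith

lemma cutWeight_arc_le (hn : 3 ≤ n) (w : ZMod n → ZMod n → ℝ) (ε : ℝ) (hε : 0 ≤ ε)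
    (hwle : ∀ u v : ZMod n, w u v ≤ if v = u + 1 ∨ u = v + 1 then 1 else ε)
    (c : ZMod n) {m : ℕ} (hm1 : 1 ≤ m) (hmn : m < n) :
    cutWeight w (arc c m) ≤ 2 + ((n : ℝ)^2 * ε) / 2 := by
  classical
  set d := c + ((m - 1 : ℕ) : ZMod n) with hd
  set S : Finset (ZMod n × ZMod n) := {(d, d+1), (c-1, c), (d+1, d), (c, c-1)} with hS
  have hb : ∀ p : ZMod n × ZMod n,
      (if (p.1 ∈ arc c m ∧ p.2 ∉ arc c m) ∨ (p.2 ∈ arc c m ∧ p.1 ∉ arc c m)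
        then w p.1 p.2 else 0) ≤ (if p ∈ S then (1:ℝ) else 0) + ε := by
    rintro ⟨u, v⟩
    have hSnn : (0:ℝ) ≤ if (u, v) ∈ S then (1:ℝ) else 0 := by split <;> norm_num
    by_cases hcr : (u ∈ arc c m ∧ v ∉ arc c m) ∨ (v ∈ arc c m ∧ u ∉ arc c m)
    · rw [if_pos hcr]
      by_cases hcy : v = u + 1 ∨ u = v + 1
      · have hmem : ((u, v) : ZMod n × ZMod n) ∈ S := by
          rcases hcy with rfl | rfl
          · rcases hcr with ⟨hin, hout⟩ | ⟨hin, hout⟩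
            · have : u = d := boundary_out hin hout
              subst this
              simp [hS]
            · have : u + 1 = c := boundary_in hout hin
              have hu : u = c - 1 := by linear_combination this
              subst hu
              simp [hS, this]
          · rcases hcr with ⟨hin, hout⟩ | ⟨hin, hout⟩
            · have : v + 1 = c := boundary_in hout hin
              have hv : v = c - 1 := by linear_combination this
              subst hv
              simp [hS, this]
            · have : v = d := boundary_out hin hout
              subst this
              simp [hS]
        rw [if_pos hmem]
        have := hwle u v
        rw [if_pos hcy] at this
        linarith
      · have := hwle u v
        rw [if_neg hcy] at this
        linarith
    · rw [if_neg hcr]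
      linarith
  have hsum : ∑ p : ZMod n × ZMod n,
      (if (p.1 ∈ arc c m ∧ p.2 ∉ arc c m) ∨ (p.2 ∈ arc c m ∧ p.1 ∉ arc c m)
        then w p.1 p.2 else 0)
      ≤ ∑ p : ZMod n × ZMod n, ((if p ∈ S then (1:ℝ) else 0) + ε) :=
    Finset.sum_le_sum (fun p _ => hb p)
  have hcardS : S.card ≤ 4 := by
    refine le_trans (Finset.card_insert_le _ _) ?_
    have h2 := Finset.card_insert_le ((c-1, c)) ({(d+1, d), (c, c-1)} : Finset (ZMod n × ZMod n))
    have h3 := Finset.card_insert_le ((d+1, d)) ({(c, c-1)} : Finset (ZMod n × ZMod n))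
    simp only [Finset.card_singleton] at *
    omega
  have heval : ∑ p : ZMod n × ZMod n, ((if p ∈ S then (1:ℝ) else 0) + ε)
      = (S.card : ℝ) + (n : ℝ)^2 * ε := by
    rw [Finset.sum_add_distrib, Finset.sum_const]
    congr 1
    · rw [Finset.sum_ite_mem, Finset.univ_inter, Finset.sum_const]
      simp
    · simp only [Finset.card_univ, Fintype.card_prod, ZMod.card, nsmul_eq_mul]
      push_cast
      ring
  have hfin : ∑ p : ZMod n × ZMod n,
      (if (p.1 ∈ arc c m ∧ p.2 ∉ arc c m) ∨ (p.2 ∈ arc c m ∧ p.1 ∉ arc c m)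
        then w p.1 p.2 else 0) ≤ 4 + (n : ℝ)^2 * ε := by
    rw [heval] at hsum
    have : (S.card : ℝ) ≤ 4 := by exact_mod_cast hcardS
    linarith
  have : cutWeight w (arc c m) = 1/2 * ∑ p : ZMod n × ZMod n,
      (if (p.1 ∈ arc c m ∧ p.2 ∉ arc c m) ∨ (p.2 ∈ arc c m ∧ p.1 ∉ arc c m)
        then w p.1 p.2 else 0) := rfl
  rw [this]
  linarith

end Stmt17Aux

/-- For every `α > 1` and `n ≥ 3` there is a weighted complete graph on `n` vertices whose
`α`-near-mincuts have characteristic vectors spanning a space of dimension `C(n,2)`. -/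
theorem stmt17 (α : ℝ) (hα : 1 < α) (n : ℕ) (hn : 3 ≤ n) [NeZero n] :
    ∃ w : ZMod n → ZMod n → ℝ,
      (∀ i j, w i j = w j i) ∧ (∀ i j, i ≠ j → 0 < w i j) ∧
      ∀ lam : ℝ,
        IsLeast {c | ∃ X : Finset (ZMod n), isCutShore X ∧ cutWeight w X = c} lam →
        Module.finrank ℝ (Submodule.span ℝ
          {v : ZMod n × ZMod n → ℝ | ∃ X : Finset (ZMod n), isCutShore X ∧
            cutWeight w X ≤ α * lam ∧ v = cutVec w X}) = n.choose 2 := by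
  classical
  open Stmt17Aux in
  have hnR : (0:ℝ) < (n : ℝ)^2 := by
    have : (0:ℝ) < (n : ℝ) := by exact_mod_cast (by omega : 0 < n)
    positivity
  set ε : ℝ := (α - 1) / (n : ℝ)^2 with hεdef
  have hε0 : 0 < ε := div_pos (by linarith) hnR
  set w : ZMod n → ZMod n → ℝ := fun i j => if j = i + 1 ∨ i = j + 1 then 1 else ε with hw
  have hwpos : ∀ u v, 0 < w u v := by
    intro u v
    rw [hw]
    dsimp only
    split
    · norm_num
    · exact hε0
  have hwle : ∀ u v : ZMod n, w u v ≤ if v = u + 1 ∨ u = v + 1 then 1 else ε :=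
    fun u v => le_of_eq rfl
  have hcyc : ∀ i : ZMod n, w i (i + 1) = 1 := fun i => if_pos (Or.inl rfl)
  have hcyc' : ∀ i : ZMod n, w (i + 1) i = 1 := fun i => if_pos (Or.inr rfl)
  refine ⟨w, fun i j => if_congr or_comm rfl rfl, fun i j _ => hwpos i j, ?_⟩
  intro lam hlam
  have hlam2 : 2 ≤ lam := by
    obtain ⟨⟨X₀, hX₀, hXw⟩, -⟩ := hlam
    exact hXw ▸ two_le_cutWeight hn w (fun u v => le_of_lt (hwpos u v)) hcyc hcyc' hX₀
  have harcW : ∀ (c : ZMod n) (m : ℕ), 1 ≤ m → m < n → cutWeight w (arc c m) ≤ α * lam := by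
    intro c m hm1 hmn
    have hb := cutWeight_arc_le hn w ε (le_of_lt hε0) hwle c hm1 hmn
    have h2 : (n : ℝ)^2 * ε = α - 1 := by
      rw [hεdef]
      field_simp
    rw [h2] at hb
    have h3 : α * 2 ≤ α * lam :=
      mul_le_mul_of_nonneg_left hlam2 (by linarith : (0:ℝ) ≤ α)
    linarith
  set S : Set (ZMod n × ZMod n → ℝ) := {v : ZMod n × ZMod n → ℝ |
    ∃ X : Finset (ZMod n), isCutShore X ∧ cutWeight w X ≤ α * lam ∧ v = cutVec w X} with hSdef
  have harc : ∀ (c : ZMod n) (m : ℕ), m ≤ n → cutVec w (arc c m) ∈ Submodule.span ℝ S := by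
    intro c m hm
    rcases Nat.eq_zero_or_pos m with rfl | hm1
    · rw [arc_zero, cutVec_empty]
      exact Submodule.zero_mem _
    rcases eq_or_lt_of_le hm with rfl | hmn
    · rw [arc_univ, cutVec_univ]
      exact Submodule.zero_mem _
    · exact Submodule.subset_span
        ⟨arc c m, ⟨arc_nonempty hm1, arc_ne_univ hmn⟩, harcW c m hm1 hmn, rfl⟩
  have hE : ∀ s : {s : Finset (ZMod n) // s.card = 2}, E s.1 ∈ Submodule.span ℝ S := by
    intro s
    obtain ⟨a, b, hab, hs⟩ := Finset.card_eq_two.mp s.2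
    rw [hs]
    set k : ℕ := (b - a).val with hk
    have hk0 : k ≠ 0 := by
      rw [hk]
      intro h
      have h2 : b - a = 0 := (ZMod.val_eq_zero _).mp h
      exact hab (sub_eq_zero.mp h2).symm
    have hkn : k < n := ZMod.val_lt _
    have hbval : b = a + (k : ZMod n) := by
      rw [hk, ZMod.natCast_zmod_val]
      ring
    have haG : a ∉ arc (a + 1) (k - 1) := notMem_arc_self (by omega)
    have hbG : b ∉ arc (a + 1) (k - 1) := by
      rw [hbval]
      exact notMem_arc_end hkn
    have e1 : insert a (arc (a + 1) (k - 1)) = arc a k := by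
      rw [← arc_succ]
      congr 1
      omega
    have e2 : insert b (arc (a + 1) (k - 1)) = arc (a + 1) k := by
      have hsnoc := arc_snoc (a + 1) (k - 1)
      have hcast : (a + 1) + ((k - 1 : ℕ) : ZMod n) = b := by
        rw [hbval]
        have hc : ((k - 1 : ℕ) : ZMod n) + 1 = (k : ZMod n) := by
          have h2 : ((k - 1) + 1 : ℕ) = k := by omega
          calc ((k - 1 : ℕ) : ZMod n) + 1 = (((k - 1) + 1 : ℕ) : ZMod n) := by push_cast; ring
          _ = (k : ZMod n) := by rw [h2]
        linear_combination hc
      rw [hcast] at hsnoc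
      rw [← hsnoc]
      congr 1
      omega
    have e4 : insert a (insert b (arc (a + 1) (k - 1))) = arc a (k + 1) := by
      rw [e2]
      exact (arc_succ a k).symm
    have hkey := key_identity w hwpos hab haG hbG
    rw [hkey, e4, e2, e1]
    refine Submodule.smul_mem _ _ (Submodule.sub_mem _ (Submodule.sub_mem _
      (Submodule.add_mem _ ?_ ?_) ?_) ?_)
    · exact harc a k (by omega)
    · exact harc (a + 1) k (by omega)
    · exact harc (a + 1) (k - 1) (by omega)
    · exact harc a (k + 1) (by omega)
  have hspan : Submodule.span ℝ S
      = Submodule.span ℝ (Set.range (fun s : {s : Finset (ZMod n) // s.card = 2} => E s.1)) := by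
    apply le_antisymm
    · rw [Submodule.span_le]
      rintro v ⟨X, hX, hwt, rfl⟩
      rw [cutVec_decomp w hwpos X]
      exact Submodule.sum_mem _ (fun s _ => Submodule.smul_mem _ _
        (Submodule.subset_span ⟨s, rfl⟩))
    · rw [Submodule.span_le]
      rintro v ⟨s, rfl⟩
      exact hE s
  rw [hspan, finrank_span_eq_card linind, card_pairs]
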